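/- Let n ≥ 2 be an integer, let r : (−T, T) → ℝ be a maximal n-catenoid profile function, let z₁(c) < 0 < z₂(c) denote the two solutions of z·r'(z − c) = r(z − c), and let f_i(c) = z_i(c)² + r(z_i(c) − c)². Then f₁(c) > f₂(c) for every c > 0. (Consequently, for c > 0 the two points where the translated profile curve is tangent to the radial direction lie on spheres of different radii, so after rescaling only the c = 0 profile curve yields a free boundary catenoid in the unit ball; this is the key step in the uniqueness of the free boundary n-catenoid.) -/

import Mathlib

/-- A maximal `n`-catenoid profile function: a twice differentiable positive function
`r` on the interval `(-T, T)` (where `0 < T ≤ ∞`, encoded via `T : EReal`) with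
`r 0 = 1`, `r' 0 = 0`, satisfying the catenoid ODE `r·r'' − (n−1)(1 + r'²) = 0`,
and with `r z → ∞` as `z → ±T`. -/
def IsMaxCatenoidProfile (n : ℕ) (T : EReal) (r : ℝ → ℝ) : Prop :=
  0 < T ∧
  (∀ z : ℝ, (z : EReal) ∈ Set.Ioo (-T) T → 0 < r z) ∧
  (∀ z : ℝ, (z : EReal) ∈ Set.Ioo (-T) T →
    DifferentiableAt ℝ r z ∧ DifferentiableAt ℝ (deriv r) z) ∧
  r 0 = 1 ∧ deriv r 0 = 0 ∧
  (∀ z : ℝ, (z : EReal) ∈ Set.Ioo (-T) T →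
    r z * deriv (deriv r) z - ((n : ℝ) - 1) * (1 + (deriv r z) ^ 2) = 0) ∧
  Filter.Tendsto r
    (Filter.comap (fun z : ℝ => (z : EReal)) (nhdsWithin T (Set.Iio T))) Filter.atTop ∧
  Filter.Tendsto r
    (Filter.comap (fun z : ℝ => (z : EReal)) (nhdsWithin (-T) (Set.Ioi (-T)))) Filter.atTop

open Set

namespace CatAux

variable {n : ℕ} {T : EReal} {r : ℝ → ℝ}

def S (T : EReal) : Set ℝ := {z : ℝ | (z : EReal) ∈ Set.Ioo (-T) T}

lemma neg_mem {z : ℝ} (hz : z ∈ S T) : -z ∈ S T := by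
  obtain ⟨h1, h2⟩ := hz
  constructor
  · rw [EReal.coe_neg]; exact EReal.neg_lt_neg_iff.mpr h2
  · rw [EReal.coe_neg, ← neg_neg T]; exact EReal.neg_lt_neg_iff.mpr h1

lemma zero_mem (hT : 0 < T) : (0:ℝ) ∈ S T := by
  constructor
  · show -T < ((0:ℝ):EReal)
    rw [EReal.coe_zero, show (0:EReal) = -0 from (neg_zero).symm]
    exact EReal.neg_lt_neg_iff.mpr hT
  · show ((0:ℝ):EReal) < T
    rw [EReal.coe_zero]; exact hT

lemma mem_of_between {x y z : ℝ} (hx : x ∈ S T) (hy : y ∈ S T) (h1 : x ≤ z) (h2 : z ≤ y) :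
    z ∈ S T :=
  ⟨lt_of_lt_of_le hx.1 (EReal.coe_le_coe_iff.mpr h1),
   lt_of_le_of_lt (EReal.coe_le_coe_iff.mpr h2) hy.2⟩

lemma Icc_subset {x y : ℝ} (hx : x ∈ S T) (hy : y ∈ S T) : Icc x y ⊆ S T :=
  fun _ hz => mem_of_between hx hy hz.1 hz.2

section
variable (hn : 2 ≤ n) (hT : 0 < T)
  (hpos : ∀ z ∈ S T, 0 < r z)
  (hdiff : ∀ z ∈ S T, DifferentiableAt ℝ r z ∧ DifferentiableAt ℝ (deriv r) z)
  (hode : ∀ z ∈ S T, r z * deriv (deriv r) z = ((n:ℝ)-1) * (1 + deriv r z ^ 2))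
  (h00 : r 0 = 1) (h00' : deriv r 0 = 0)

include hn hpos hdiff hode in
lemma hasDerivAt_F : ∀ x ∈ S T,
    HasDerivAt (fun y => (1 + deriv r y ^ 2) / r y ^ (2*n-2)) 0 x := by
  intro x hx
  obtain ⟨k, rfl⟩ : ∃ k, n = k + 2 := ⟨n-2, by omega⟩
  have hR := (hdiff x hx).1.hasDerivAt
  have hE := (hdiff x hx).2.hasDerivAt
  have hRx := hpos x hx
  have hode' := hode x hx
  have hnum : HasDerivAt (fun y => 1 + deriv r y ^ 2)
      (0 + 2 * deriv r x ^ 1 * deriv (deriv r) x) x := (hasDerivAt_const x 1).add (hE.pow 2)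
  have hden : HasDerivAt (fun y => r y ^ (2*(k+2)-2))
      (↑(2*(k+2)-2) * r x ^ (2*(k+2)-2-1) * deriv r x) x := hR.pow _
  have hden0 : r x ^ (2*(k+2)-2) ≠ 0 := pow_ne_zero _ hRx.ne'
  have := hnum.div hden hden0
  refine this.congr_deriv (Eq.symm ?_)
  simp only [show 2*(k+2)-2 = 2*k+2 from by omega, show 2*(k+2)-2-1 = 2*k+1 from by omega] at *
  have hps : r x ^ (2*k+2) = r x ^ (2*k+1) * r x := by rw [pow_succ]
  push_cast at hode' ⊢
  rw [eq_comm, div_eq_zero_iff]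
  left
  rw [hps]
  linear_combination (2 * deriv r x * r x ^ (2*k+1)) * hode'

include hn hT hpos hdiff hode h00 h00' in
lemma first_integral : ∀ z ∈ S T, 1 + deriv r z ^ 2 = r z ^ (2*n-2) := by
  have hF := hasDerivAt_F hn hpos hdiff hode
  intro z hz
  have h0S : (0:ℝ) ∈ S T := zero_mem hT
  have key : (1 + deriv r z ^ 2) / r z ^ (2*n-2) = 1 := by
    rcases le_total 0 z with h | h
    · have hsub := Icc_subset (T := T) h0S hz
      have := constant_of_has_deriv_right_zero
        (f := fun y => (1 + deriv r y ^ 2) / r y ^ (2*n-2)) (a := 0) (b := z)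
        (fun x hx => ((hF x (hsub hx)).continuousAt).continuousWithinAt)
        (fun x hx => (hF x (hsub (Ico_subset_Icc_self hx))).hasDerivWithinAt)
        z (by simp [h])
      rw [this, h00, h00']; norm_num
    · have hsub := Icc_subset (T := T) hz h0S
      have := constant_of_has_deriv_right_zero
        (f := fun y => (1 + deriv r y ^ 2) / r y ^ (2*n-2)) (a := z) (b := 0)
        (fun x hx => ((hF x (hsub hx)).continuousAt).continuousWithinAt)
        (fun x hx => (hF x (hsub (Ico_subset_Icc_self hx))).hasDerivWithinAt)
        0 (by simp [h])
      rw [← this, h00, h00']; norm_num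
  have hden0 : r z ^ (2*n-2) ≠ 0 := pow_ne_zero _ (hpos z hz).ne'
  field_simp at key
  linarith [key]

include hn hT hpos hdiff hode h00 h00' in
lemma r_ge_one : ∀ z ∈ S T, 1 ≤ r z := by
  intro z hz
  have h1 := first_integral hn hT hpos hdiff hode h00 h00' z hz
  by_contra hlt
  push_neg at hlt
  have : r z ^ (2*n-2) < 1 := by
    apply pow_lt_one₀ (hpos z hz).le hlt (by omega)
  nlinarith [sq_nonneg (deriv r z)]

include hn hT hpos hdiff hode h00 h00' in
lemma r_le_v : ∀ z ∈ S T, r z ≤ 1 + deriv r z ^ 2 := by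
  intro z hz
  have h1 := first_integral hn hT hpos hdiff hode h00 h00' z hz
  have h2 := r_ge_one hn hT hpos hdiff hode h00 h00' z hz
  calc r z = r z ^ 1 := (pow_one _).symm
    _ ≤ r z ^ (2*n-2) := pow_le_pow_right₀ h2 (by omega)
    _ = 1 + deriv r z ^ 2 := h1.symm


include hn hpos hode in
lemma hE'eq : ∀ z ∈ S T, deriv (deriv r) z = ((n:ℝ)-1)*(1+deriv r z^2)/r z := by
  intro z hz
  have h := hode z hz
  have h2 := (hpos z hz).ne'
  field_simp
  linarith

include hn hpos hdiff hode in
lemma dd_pos : ∀ z ∈ S T, 0 < deriv (deriv r) z := by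
  intro z hz
  rw [hE'eq hn hpos hode z hz]
  have h2 : (2:ℝ) ≤ (n:ℝ) := by exact_mod_cast hn
  have h3 := hpos z hz
  apply div_pos _ h3
  nlinarith [sq_nonneg (deriv r z)]

include hn hT hpos hdiff hode h00' in
lemma E_neg : ∀ z ∈ S T, z < 0 → deriv r z < 0 := by
  intro z hz hz0
  have hsub := Icc_subset (T := T) hz (zero_mem hT)
  have hm := strictMonoOn_of_deriv_pos (convex_Icc z 0)
    (fun x hx => ((hdiff x (hsub hx)).2.continuousAt.continuousWithinAt))
    (fun x hx => by
      rw [interior_Icc] at hx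
      exact dd_pos hn hpos hdiff hode x (hsub (Ioo_subset_Icc_self hx)))
  have := hm (left_mem_Icc.2 hz0.le) (right_mem_Icc.2 hz0.le) hz0
  rwa [h00'] at this

include hn hT hpos hdiff hode h00' in
lemma E_pos : ∀ z ∈ S T, 0 < z → 0 < deriv r z := by
  intro z hz hz0
  have hsub := Icc_subset (T := T) (zero_mem hT) hz
  have hm := strictMonoOn_of_deriv_pos (convex_Icc 0 z)
    (fun x hx => ((hdiff x (hsub hx)).2.continuousAt.continuousWithinAt))
    (fun x hx => by
      rw [interior_Icc] at hx
      exact dd_pos hn hpos hdiff hode x (hsub (Ioo_subset_Icc_self hx)))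
  have := hm (left_mem_Icc.2 hz0.le) (right_mem_Icc.2 hz0.le) hz0
  rwa [h00'] at this

include hn hpos hdiff hode in
lemma hasDerivAt_h : ∀ z ∈ S T, deriv r z ≠ 0 →
    HasDerivAt (fun x => r x / deriv r x - x)
      (-(((n:ℝ)-1) * (1 + deriv r z ^ 2) / deriv r z ^ 2)) z := by
  intro z hz hE0
  have hR := (hdiff z hz).1.hasDerivAt
  have hE := (hdiff z hz).2.hasDerivAt
  have hE' := hE'eq hn hpos hode z hz
  have hR0 := (hpos z hz).ne'
  have h1 := (hR.div hE hE0).sub (hasDerivAt_id z)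
  refine h1.congr_deriv (Eq.symm ?_)
  rw [hE']
  field_simp
  ring

include hn hpos hdiff hode in
lemma hasDerivAt_G : ∀ z ∈ S T, deriv r z ≠ 0 →
    HasDerivAt (fun x => (r x / deriv r x)^2 + r x ^ 2)
      ((2*r z*(deriv r z ^2 + (1 - (n:ℝ)))/(((n:ℝ)-1)*deriv r z)) *
        (((n:ℝ)-1) * (1 + deriv r z ^ 2) / deriv r z ^ 2)) z := by
  intro z hz hE0
  have hR := (hdiff z hz).1.hasDerivAt
  have hE := (hdiff z hz).2.hasDerivAt
  have hE' := hE'eq hn hpos hode z hz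
  have hR0 := (hpos z hz).ne'
  have hnn : ((n:ℝ)-1) ≠ 0 := by
    have : (2:ℝ) ≤ (n:ℝ) := by exact_mod_cast hn
    linarith
  have h1 := ((hR.div hE hE0).pow 2).add (hR.pow 2)
  refine h1.congr_deriv (Eq.symm ?_)
  rw [hE']
  simp only [Pi.div_apply, show (2:ℕ)-1 = 1 from rfl, pow_one, Nat.cast_ofNat]
  field_simp
  ring

include hn hpos hdiff hode in
lemma hasDerivAt_q : ∀ z ∈ S T, deriv r z ≠ 0 →
    HasDerivAt (fun x => 2*r x*(deriv r x ^2 + (1 - (n:ℝ))) / (((n:ℝ)-1)*deriv r x))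
      ((2/((n:ℝ)-1)) * (((n:ℝ)*(1+deriv r z^2)^2 + ((n:ℝ)^2-4*(n:ℝ)+1)*(1+deriv r z^2) + (n:ℝ))
        / deriv r z ^ 2)) z := by
  intro z hz hE0
  have hR := (hdiff z hz).1.hasDerivAt
  have hE := (hdiff z hz).2.hasDerivAt
  have hE' := hE'eq hn hpos hode z hz
  have hR0 := (hpos z hz).ne'
  have hnn : ((n:ℝ)-1) ≠ 0 := by
    have : (2:ℝ) ≤ (n:ℝ) := by exact_mod_cast hn
    linarith
  have hu : HasDerivAt (fun x => 2*r x*(deriv r x ^2 + (1 - (n:ℝ))))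
      (2*deriv r z*(deriv r z ^2 + (1 - (n:ℝ))) + 2*r z*(2*deriv r z ^1*deriv (deriv r) z)) z := by
    have := (hR.const_mul 2).mul ((hE.pow 2).add_const (1 - (n:ℝ)))
    refine this.congr_deriv ?_
    simp only [Pi.pow_apply]
    norm_num
  have hd : HasDerivAt (fun x => ((n:ℝ)-1)*deriv r x) (((n:ℝ)-1)*deriv (deriv r) z) z :=
    hE.const_mul _
  have hd0 : ((n:ℝ)-1)*deriv r z ≠ 0 := mul_ne_zero hnn hE0
  have h1 := hu.div hd hd0
  refine h1.congr_deriv (Eq.symm ?_)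
  rw [hE']
  field_simp
  ring

lemma neg_mem_Icc' {a t : ℝ} (h : t ∈ Icc (0:ℝ) a) : -t ∈ Icc (-a) a :=
  ⟨neg_le_neg h.2, by linarith [h.1, h.2]⟩

set_option maxHeartbeats 1000000 in
include hn hT hpos hdiff hode h00 h00' in
lemma even_r_nonneg : ∀ z ∈ S T, 0 ≤ z → r (-z) = r z ∧ deriv r (-z) = -deriv r z := by
  intro z hz hz0
  have hnz : -z ∈ S T := neg_mem hz
  have hJ : Icc (-z) z ⊆ S T := Icc_subset hnz hz
  have hJ2 : Icc (0:ℝ) z ⊆ Icc (-z) z := Icc_subset_Icc (by linarith) le_rfl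
  have hmem : ∀ t ∈ Icc (0:ℝ) z, t ∈ S T ∧ -t ∈ S T := by
    intro t ht
    exact ⟨hJ (hJ2 ht), hJ (neg_mem_Icc' ht)⟩
  -- bound
  have hcont : ContinuousOn (fun t => (r t, deriv r t)) (Icc (-z) z) := by
    intro t ht
    exact (((hdiff t (hJ ht)).1.continuousAt).prodMk ((hdiff t (hJ ht)).2.continuousAt)).continuousWithinAt
  obtain ⟨C, hC⟩ := (isCompact_Icc (a := -z) (b := z)).exists_bound_of_continuousOn hcont
  have hn2 : (2:ℝ) ≤ (n:ℝ) := by exact_mod_cast hn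
  obtain ⟨M, hM1, hMb⟩ : ∃ M : ℝ, 1 ≤ M ∧ ∀ t ∈ Icc (-z) z, |r t| ≤ M ∧ |deriv r t| ≤ M := by
    refine ⟨max C 1, le_max_right _ _, ?_⟩
    intro t ht
    have h1 := hC t ht
    have h2 := norm_fst_le ((r t, deriv r t) : ℝ × ℝ)
    have h3 := norm_snd_le ((r t, deriv r t) : ℝ × ℝ)
    have h2' : |r t| ≤ C := le_trans h2 h1
    have h3' : |deriv r t| ≤ C := le_trans h3 h1
    exact ⟨le_trans h2' (le_max_left _ _), le_trans h3' (le_max_left _ _)⟩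
  obtain ⟨L, hL1, hLk⟩ : ∃ L : ℝ, 1 ≤ L ∧
      ((n:ℝ)-1)*(2*M^2) + ((n:ℝ)-1)*(1+M^2) ≤ L :=
    ⟨(n:ℝ) * (1 + 3*M^2), by nlinarith, by nlinarith⟩
  have hL0 : (0:ℝ) ≤ L := by linarith
  set Ks : Set (ℝ × ℝ) := Icc (1:ℝ) M ×ˢ Icc (-M) M with hKs
  set v : ℝ → ℝ × ℝ → ℝ × ℝ := fun _ p => (p.2, ((n:ℝ)-1)*(1+p.2^2)/p.1) with hv_def
  have hlip : ∀ t : ℝ, LipschitzOnWith (Real.toNNReal L) (v t) Ks := by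
    intro t
    rw [lipschitzOnWith_iff_dist_le_mul]
    intro p hp q hq
    rw [Real.coe_toNNReal _ hL0]
    obtain ⟨⟨hp11, hp12⟩, hp2⟩ := hp
    obtain ⟨⟨hq11, hq12⟩, hq2⟩ := hq
    have hp2a : |p.2| ≤ M := abs_le.2 ⟨hp2.1, hp2.2⟩
    have hq2a : |q.2| ≤ M := abs_le.2 ⟨hq2.1, hq2.2⟩
    rw [Prod.dist_eq, Prod.dist_eq]
    have hd1 : dist p.1 q.1 ≤ max (dist p.1 q.1) (dist p.2 q.2) := le_max_left _ _
    have hd2 : dist p.2 q.2 ≤ max (dist p.1 q.1) (dist p.2 q.2) := le_max_right _ _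
    have hdn : (0:ℝ) ≤ max (dist p.1 q.1) (dist p.2 q.2) := le_trans dist_nonneg hd1
    apply max_le
    · calc dist (v t p).1 (v t q).1 = dist p.2 q.2 := rfl
        _ ≤ max (dist p.1 q.1) (dist p.2 q.2) := hd2
        _ ≤ L * max (dist p.1 q.1) (dist p.2 q.2) := le_mul_of_one_le_left hdn hL1
    · have e1 : dist p.1 q.1 = |p.1 - q.1| := Real.dist_eq _ _
      have e2 : dist p.2 q.2 = |p.2 - q.2| := Real.dist_eq _ _
      have hp10 : (0:ℝ) < p.1 := lt_of_lt_of_le zero_lt_one hp11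
      have hq10 : (0:ℝ) < q.1 := lt_of_lt_of_le zero_lt_one hq11
      have key : (v t p).2 - (v t q).2
          = ((n:ℝ)-1) * ((q.1*(p.2^2 - q.2^2) + (1+q.2^2)*(q.1 - p.1))) / (p.1*q.1) := by
        show ((n:ℝ)-1)*(1+p.2^2)/p.1 - ((n:ℝ)-1)*(1+q.2^2)/q.1 = _
        field_simp
        ring
      have hnum : |q.1*(p.2^2 - q.2^2) + (1+q.2^2)*(q.1 - p.1)|
          ≤ 2*M^2 * |p.2 - q.2| + (1+M^2) * |p.1 - q.1| := by
        have t1 : |q.1*(p.2^2 - q.2^2)| ≤ 2*M^2 * |p.2 - q.2| := by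
          rw [abs_mul]
          have : |p.2^2 - q.2^2| = |p.2 + q.2| * |p.2 - q.2| := by
            rw [← abs_mul]; ring_nf
          rw [this]
          have h4 : |q.1| ≤ M := by rw [abs_of_pos hq10]; exact hq12
          have h5 : |p.2 + q.2| ≤ 2*M := by
            calc |p.2 + q.2| ≤ |p.2| + |q.2| := abs_add_le _ _
              _ ≤ 2*M := by linarith
          have h6 : (0:ℝ) ≤ |p.2 - q.2| := abs_nonneg _
          calc |q.1| * (|p.2 + q.2| * |p.2 - q.2|)
              ≤ M * (2*M * |p.2 - q.2|) := by
                apply mul_le_mul h4 (mul_le_mul_of_nonneg_right h5 h6) (by positivity)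
                  (by linarith)
            _ = 2*M^2 * |p.2 - q.2| := by ring
        have t2 : |(1+q.2^2)*(q.1 - p.1)| ≤ (1+M^2) * |p.1 - q.1| := by
          rw [abs_mul, abs_sub_comm q.1 p.1]
          have h7 : |1+q.2^2| = 1+q.2^2 := abs_of_pos (by positivity)
          rw [h7]
          have hq22 : q.2^2 ≤ M^2 := by
            have := pow_le_pow_left₀ (abs_nonneg q.2) hq2a 2
            rwa [sq_abs] at this
          exact mul_le_mul_of_nonneg_right (by linarith) (abs_nonneg _)
        calc |q.1*(p.2^2 - q.2^2) + (1+q.2^2)*(q.1 - p.1)|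
            ≤ |q.1*(p.2^2 - q.2^2)| + |(1+q.2^2)*(q.1 - p.1)| := abs_add_le _ _
          _ ≤ _ := by linarith
      have habs : |(v t p).2 - (v t q).2|
          ≤ ((n:ℝ)-1) * (2*M^2 * |p.2 - q.2| + (1+M^2) * |p.1 - q.1|) := by
        rw [key, abs_div, abs_mul]
        have h8 : |((n:ℝ)-1)| = (n:ℝ)-1 := abs_of_pos (by linarith)
        have h9 : |p.1*q.1| = p.1*q.1 := abs_of_pos (by positivity)
        rw [h8, h9]
        have h10 : (1:ℝ) ≤ p.1*q.1 := by nlinarith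
        have h11 : ((n:ℝ)-1) * |q.1*(p.2^2 - q.2^2) + (1+q.2^2)*(q.1 - p.1)|
            ≤ ((n:ℝ)-1) * (2*M^2 * |p.2 - q.2| + (1+M^2) * |p.1 - q.1|) := by
          apply mul_le_mul_of_nonneg_left hnum (by linarith)
        calc ((n:ℝ)-1) * |q.1*(p.2^2 - q.2^2) + (1+q.2^2)*(q.1 - p.1)| / (p.1*q.1)
            ≤ ((n:ℝ)-1) * |q.1*(p.2^2 - q.2^2) + (1+q.2^2)*(q.1 - p.1)| := by
              apply div_le_self (mul_nonneg (by linarith) (abs_nonneg _)) h10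
          _ ≤ _ := h11
      rw [Real.dist_eq, e1, e2]
      calc |(v t p).2 - (v t q).2|
          ≤ ((n:ℝ)-1) * (2*M^2 * |p.2 - q.2| + (1+M^2) * |p.1 - q.1|) := habs
        _ ≤ L * max |p.1 - q.1| |p.2 - q.2| := by
            have a1 : |p.1 - q.1| ≤ max |p.1 - q.1| |p.2 - q.2| := le_max_left _ _
            have a2 : |p.2 - q.2| ≤ max |p.1 - q.1| |p.2 - q.2| := le_max_right _ _
            have a3 : (0:ℝ) ≤ max |p.1 - q.1| |p.2 - q.2| := le_trans (abs_nonneg _) a1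
            have b1 : 2*M^2*|p.2 - q.2| ≤ 2*M^2 * max |p.1 - q.1| |p.2 - q.2| :=
              mul_le_mul_of_nonneg_left a2 (by positivity)
            have b2 : (1+M^2)*|p.1 - q.1| ≤ (1+M^2) * max |p.1 - q.1| |p.2 - q.2| :=
              mul_le_mul_of_nonneg_left a1 (by positivity)
            have b4 : (0:ℝ) ≤ (n:ℝ)-1 := by linarith
            have b3 := mul_le_mul_of_nonneg_left (add_le_add b1 b2) b4
            have b5 := mul_le_mul_of_nonneg_right hLk a3
            nlinarith [b3, b5]
  -- the two solutions
  set f : ℝ → ℝ × ℝ := fun t => (r t, deriv r t) with hf_def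
  set g : ℝ → ℝ × ℝ := fun t => (r (-t), -deriv r (-t)) with hg_def
  have hf' : ∀ t ∈ Ico (0:ℝ) z, HasDerivWithinAt f (v t (f t)) (Ici t) t := by
    intro t ht
    have htS := (hmem t (Ico_subset_Icc_self ht)).1
    have hR := (hdiff t htS).1.hasDerivAt
    have hE := (hdiff t htS).2.hasDerivAt
    have h1 := hR.prodMk hE
    have h2 : (deriv r t, deriv (deriv r) t) = v t (f t) := by
      rw [hv_def]
      simp only [hf_def]
      rw [hE'eq hn hpos hode t htS]
    rw [h2] at h1
    exact h1.hasDerivWithinAt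
  have hg' : ∀ t ∈ Ico (0:ℝ) z, HasDerivWithinAt g (v t (g t)) (Ici t) t := by
    intro t ht
    have htS := (hmem t (Ico_subset_Icc_self ht)).2
    have hR := ((hdiff (-t) htS).1.hasDerivAt).comp t (hasDerivAt_neg t)
    have hE := (((hdiff (-t) htS).2.hasDerivAt).comp t (hasDerivAt_neg t)).neg
    have h1 := hR.prodMk hE
    have h2 : (deriv r (-t) * (-1), -(deriv (deriv r) (-t) * (-1))) = v t (g t) := by
      rw [hv_def]
      simp only [hg_def]
      rw [hE'eq hn hpos hode (-t) htS, Prod.mk.injEq]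
      constructor
      · ring
      · ring
    rw [h2] at h1
    exact h1.hasDerivWithinAt
  have hfs : ∀ t ∈ Ico (0:ℝ) z, f t ∈ Ks := by
    intro t ht
    have htI : t ∈ Icc (-z) z := hJ2 (Ico_subset_Icc_self ht)
    have htS := (hmem t (Ico_subset_Icc_self ht)).1
    obtain ⟨b1, b2⟩ := hMb t htI
    refine ⟨⟨r_ge_one hn hT hpos hdiff hode h00 h00' t htS, ?_⟩, ?_, ?_⟩
    · exact le_trans (le_abs_self _) b1
    · linarith [neg_abs_le (deriv r t)]
    · linarith [le_abs_self (deriv r t)]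
  have hgs : ∀ t ∈ Ico (0:ℝ) z, g t ∈ Ks := by
    intro t ht
    have ht' := Ico_subset_Icc_self ht
    have htI : -t ∈ Icc (-z) z := ⟨by simp [neg_le_neg ht'.2], by linarith [ht'.1, ht'.2]⟩
    have htS := (hmem t ht').2
    obtain ⟨b1, b2⟩ := hMb (-t) htI
    refine ⟨⟨r_ge_one hn hT hpos hdiff hode h00 h00' (-t) htS, ?_⟩, ?_, ?_⟩
    · exact le_trans (le_abs_self _) b1
    · simp only [hg_def]
      have := le_abs_self (deriv r (-t))
      linarith
    · simp only [hg_def]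
      have := neg_abs_le (deriv r (-t))
      linarith
  have hfc : ContinuousOn f (Icc (0:ℝ) z) := by
    intro t ht
    have htS := (hmem t ht).1
    exact (((hdiff t htS).1.continuousAt).prodMk ((hdiff t htS).2.continuousAt)).continuousWithinAt
  have hgc : ContinuousOn g (Icc (0:ℝ) z) := by
    intro t ht
    have htS := (hmem t ht).2
    have c1 : ContinuousAt (fun s : ℝ => r (-s)) t :=
      ((hdiff (-t) htS).1.continuousAt).comp (continuous_neg.continuousAt)
    have c2 : ContinuousAt (fun s : ℝ => -deriv r (-s)) t :=
      (((hdiff (-t) htS).2.continuousAt).comp (continuous_neg.continuousAt)).neg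
    exact (c1.prodMk c2).continuousWithinAt
  have ha : f 0 = g 0 := by
    simp only [hf_def, hg_def, neg_zero, h00']
    try norm_num
  have := ODE_solution_unique_of_mem_Icc_right (fun t _ => hlip t) hfc hf' hfs hgc hg' hgs ha
    (right_mem_Icc.2 hz0)
  simp only [hf_def, hg_def, Prod.mk.injEq] at this
  exact ⟨this.1.symm, by linarith [this.2]⟩

include hn hT hpos hdiff hode h00 h00' in
lemma even_r : ∀ z ∈ S T, r (-z) = r z ∧ deriv r (-z) = -deriv r z := by
  intro z hz
  rcases le_total 0 z with h | h
  · exact even_r_nonneg hn hT hpos hdiff hode h00 h00' z hz h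
  · obtain ⟨e1, e2⟩ := even_r_nonneg hn hT hpos hdiff hode h00 h00' (-z) (neg_mem hz)
      (by linarith)
    rw [neg_neg] at e1 e2
    exact ⟨e1.symm, by linarith⟩

lemma monoHelper {f φ : ℝ → ℝ} {p q : ℝ}
    (hd : ∀ x ∈ Icc p q, HasDerivAt f (φ x) x)
    (h0 : ∀ x ∈ Ioo p q, 0 ≤ φ x) : MonotoneOn f (Icc p q) := by
  apply monotoneOn_of_deriv_nonneg (convex_Icc p q)
    (fun x hx => (hd x hx).continuousAt.continuousWithinAt)
  · intro x hx
    rw [interior_Icc] at hx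
    exact ((hd x (Ioo_subset_Icc_self hx)).differentiableAt).differentiableWithinAt
  · intro x hx
    rw [interior_Icc] at hx
    rw [(hd x (Ioo_subset_Icc_self hx)).deriv]
    exact h0 x hx

lemma antiHelper {f φ : ℝ → ℝ} {p q : ℝ}
    (hd : ∀ x ∈ Icc p q, HasDerivAt f (φ x) x)
    (h0 : ∀ x ∈ Ioo p q, φ x ≤ 0) : AntitoneOn f (Icc p q) := by
  apply antitoneOn_of_deriv_nonpos (convex_Icc p q)
    (fun x hx => (hd x hx).continuousAt.continuousWithinAt)
  · intro x hx
    rw [interior_Icc] at hx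
    exact ((hd x (Ioo_subset_Icc_self hx)).differentiableAt).differentiableWithinAt
  · intro x hx
    rw [interior_Icc] at hx
    rw [(hd x (Ioo_subset_Icc_self hx)).deriv]
    exact h0 x hx

set_option maxHeartbeats 1600000 in
include hn hT hpos hdiff hode h00 h00' in
lemma key_comparison : ∀ a b cc : ℝ, a ∈ S T → b ∈ S T → 0 < a → 0 < b → 0 < cc →
    r a / deriv r a - a = cc → r b / deriv r b - b = -cc →
    (r a / deriv r a)^2 + r a ^ 2 < (r b / deriv r b)^2 + r b ^ 2 := by
  intro a b cc haS hbS ha0 hb0 hcc ha_eq hb_eq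
  have hn2 : (2:ℝ) ≤ (n:ℝ) := by exact_mod_cast hn
  have hn1 : (0:ℝ) < (n:ℝ)-1 := by linarith
  -- a < b
  have hab : a < b := by
    rcases lt_trichotomy a b with h | h | h
    · exact h
    · exfalso; rw [h, hb_eq] at ha_eq; linarith
    · exfalso
      have hsub : Icc b a ⊆ S T := Icc_subset hbS haS
      have hanti : AntitoneOn (fun x => r x / deriv r x - x) (Icc b a) := by
        apply antiHelper (φ := fun x => -(((n:ℝ)-1) * (1 + deriv r x ^ 2) / deriv r x ^ 2))
        · intro x hx
          have hxS := hsub hx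
          have hx0 : 0 < x := lt_of_lt_of_le hb0 hx.1
          exact hasDerivAt_h hn hpos hdiff hode x hxS
            (E_pos hn hT hpos hdiff hode h00' x hxS hx0).ne'
        · intro x hx
          have hxS := hsub (Ioo_subset_Icc_self hx)
          have hx0 : 0 < x := lt_of_lt_of_le hb0 (le_of_lt hx.1)
          have hE := E_pos hn hT hpos hdiff hode h00' x hxS hx0
          have : 0 < ((n:ℝ)-1) * (1 + deriv r x ^ 2) / deriv r x ^ 2 := by positivity
          linarith
      have := hanti (left_mem_Icc.2 h.le) (right_mem_Icc.2 h.le) h.le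
      simp only at this
      rw [ha_eq, hb_eq] at this
      linarith
  have hsub : Icc a b ⊆ S T := Icc_subset haS hbS
  have hmemf : ∀ x ∈ Icc a b, x ∈ S T ∧ 0 < x ∧ 0 < deriv r x := by
    intro x hx
    have hxS := hsub hx
    have hx0 : 0 < x := lt_of_lt_of_le ha0 hx.1
    exact ⟨hxS, hx0, E_pos hn hT hpos hdiff hode h00' x hxS hx0⟩
  -- continuity of h, IVT
  have hcont : ContinuousOn (fun x => r x / deriv r x - x) (Icc a b) := by
    intro x hx
    obtain ⟨hxS, hx0, hE⟩ := hmemf x hx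
    exact (hasDerivAt_h hn hpos hdiff hode x hxS hE.ne').continuousAt.continuousWithinAt
  obtain ⟨wst, hwmem, hwst⟩ : ∃ w ∈ Icc a b, r w / deriv r w - w = 0 := by
    have h0mem : (0:ℝ) ∈ Icc (r b / deriv r b - b) (r a / deriv r a - a) := by
      rw [ha_eq, hb_eq]; constructor <;> linarith
    obtain ⟨w, hw1, hw2⟩ := intermediate_value_Icc' hab.le hcont h0mem
    exact ⟨w, hw1, hw2⟩
  obtain ⟨hwS, hw0, hEst⟩ := hmemf wst hwmem
  have hrst : r wst = wst * deriv r wst := by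
    field_simp at hwst
    linarith [hwst]
  -- fact (A) : n < 1 + (deriv r wst)^2
  have h0S : (0:ℝ) ∈ S T := zero_mem hT
  have h0w : Icc (0:ℝ) wst ⊆ S T := Icc_subset h0S hwS
  have sub1 : ∀ x ∈ Icc (0:ℝ) wst, ((n:ℝ)-1)*x ≤ deriv r x := by
    have hm : MonotoneOn (fun x => deriv r x - ((n:ℝ)-1)*x) (Icc 0 wst) := by
      apply monoHelper (φ := fun x => deriv (deriv r) x - ((n:ℝ)-1))
      · intro x hx
        exact ((hdiff x (h0w hx)).2.hasDerivAt).sub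
          (((hasDerivAt_id x).const_mul ((n:ℝ)-1)).congr_deriv (by ring))
      · intro x hx
        have hxS := h0w (Ioo_subset_Icc_self hx)
        rw [hE'eq hn hpos hode x hxS]
        have hrl := r_le_v hn hT hpos hdiff hode h00 h00' x hxS
        have hrp := hpos x hxS
        rw [sub_nonneg, le_div_iff₀ hrp]
        nlinarith
    intro x hx
    have := hm (left_mem_Icc.2 (le_trans hx.1 hx.2)) hx hx.1
    simp only [h00'] at this
    linarith
  have sub2 : ((n:ℝ)-1)/2 * wst^2 ≤ r wst - 1 := by
    have hm : MonotoneOn (fun x => r x - 1 - ((n:ℝ)-1)/2*x^2) (Icc 0 wst) := by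
      apply monoHelper (φ := fun x => deriv r x - ((n:ℝ)-1)*x)
      · intro x hx
        have d1 := (hdiff x (h0w hx)).1.hasDerivAt
        have := (d1.sub_const 1).sub (((hasDerivAt_id x).pow 2).const_mul (((n:ℝ)-1)/2))
        apply this.congr_deriv
        simp only [id_eq]
        push_cast
        ring
      · intro x hx
        have := sub1 x (Ioo_subset_Icc_self hx)
        linarith
    have := hm (left_mem_Icc.2 hw0.le) (right_mem_Icc.2 hw0.le) hw0.le
    simp only [h00] at this
    linarith
  have factA : (n:ℝ) < 1 + (deriv r wst)^2 := by
    by_contra hcon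
    push_neg at hcon
    have hE2 : (deriv r wst)^2 ≤ (n:ℝ)-1 := by linarith
    have hr1 : 1 ≤ r wst := r_ge_one hn hT hpos hdiff hode h00 h00' wst hwS
    have e1 : r wst ^2 = wst^2 * (deriv r wst)^2 := by rw [hrst]; ring
    have e2 : wst^2 * (deriv r wst)^2 ≤ wst^2 * ((n:ℝ)-1) :=
      mul_le_mul_of_nonneg_left hE2 (sq_nonneg _)
    nlinarith [sq_nonneg (r wst - 1)]
  -- constants
  set Est := deriv r wst with hEstdef
  set vst : ℝ := 1 + Est^2 with hvst
  set Kc : ℝ := (n:ℝ)^2 - 4*(n:ℝ) + 1 with hKc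
  set qstar : ℝ := 2*r wst*(Est^2 + (1 - (n:ℝ)))/(((n:ℝ)-1)*Est) with hqstar
  set Cc : ℝ := (2/(((n:ℝ)-1)^2)) * (((n:ℝ)*vst^2 + Kc*vst + (n:ℝ))/vst) with hCc
  have hqstar_pos : 0 < qstar := by
    rw [hqstar]
    have h1 : 0 < Est^2 + (1 - (n:ℝ)) := by rw [hvst] at factA; linarith
    have h2 : 0 < r wst := hpos wst hwS
    positivity
  have hvst1 : 1 < vst := by rw [hvst]; nlinarith
  -- E monotone on Icc a b
  have hEmono : MonotoneOn (deriv r) (Icc a b) := by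
    apply monoHelper (φ := fun x => deriv (deriv r) x)
    · intro x hx
      exact (hdiff x (hsub hx)).2.hasDerivAt
    · intro x hx
      exact (dd_pos hn hpos hdiff hode x (hsub (Ioo_subset_Icc_self hx))).le
  -- Ξ ≥ 0 on Icc a b
  set XI : ℝ → ℝ := fun x =>
    2*r x*(deriv r x^2 + (1 - (n:ℝ)))/(((n:ℝ)-1)*deriv r x) - qstar + Cc * (r x / deriv r x - x)
    with hXIdef
  have hXId : ∀ x ∈ Icc a b, HasDerivAt XI
      ((2/((n:ℝ)-1)) * (((n:ℝ)*(1+deriv r x^2)^2 + Kc*(1+deriv r x^2) + (n:ℝ)) / deriv r x ^ 2)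
        + Cc * (-(((n:ℝ)-1) * (1 + deriv r x ^ 2) / deriv r x ^ 2))) x := by
    intro x hx
    obtain ⟨hxS, hx0, hE⟩ := hmemf x hx
    exact (((hasDerivAt_q hn hpos hdiff hode x hxS hE.ne').sub_const qstar).add
      ((hasDerivAt_h hn hpos hdiff hode x hxS hE.ne').const_mul Cc))
  have hXIsign : ∀ x ∈ Icc a b, 0 < deriv r x →
      ((1 + deriv r x^2 ≤ vst ∧ x ≤ wst) ∨ (vst ≤ 1 + deriv r x^2 ∧ wst ≤ x)) → True := fun _ _ _ _ => trivial
  have hXIter : ∀ x : ℝ, 0 < deriv r x → (1:ℝ) ≤ 1 + deriv r x^2 := by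
    intro x _; nlinarith [sq_nonneg (deriv r x)]
  have hXIval : ∀ x : ℝ, deriv r x ≠ 0 →
      (2/((n:ℝ)-1)) * (((n:ℝ)*(1+deriv r x^2)^2 + Kc*(1+deriv r x^2) + (n:ℝ)) / deriv r x ^ 2)
        + Cc * (-(((n:ℝ)-1) * (1 + deriv r x ^ 2) / deriv r x ^ 2))
      = (2/((n:ℝ)-1)) *
        ((((n:ℝ)*(1+deriv r x^2)^2 + Kc*(1+deriv r x^2) + (n:ℝ)) * vst
          - (1+deriv r x^2) * ((n:ℝ)*vst^2 + Kc*vst + (n:ℝ))) / (vst * deriv r x ^ 2)) := by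
    intro x hE
    rw [hCc]
    have hv0 : vst ≠ 0 := by nlinarith
    field_simp
    ring
  have hXinonneg : ∀ x ∈ Icc a b, 0 ≤ XI x := by
    have hXiwst : XI wst = 0 := by
      rw [hXIdef]
      simp only
      rw [hwst, ← hEstdef, ← hqstar]
      ring
    intro x hx
    rcases le_total x wst with hxw | hxw
    · have hAnti : AntitoneOn XI (Icc a wst) := by
        apply antiHelper (hd := fun y hy => hXId y (Icc_subset_Icc_right hwmem.2 hy))
        intro y hy
        have hyI : y ∈ Icc a b := Icc_subset_Icc_right hwmem.2 (Ioo_subset_Icc_self hy)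
        obtain ⟨hyS, hy0, hyE⟩ := hmemf y hyI
        rw [hXIval y hyE.ne']
        have hvy1 : (1:ℝ) ≤ 1 + deriv r y^2 := hXIter y hyE
        have hvyv : 1 + deriv r y^2 ≤ vst := by
          rw [hvst, hEstdef]
          have := hEmono hyI hwmem (le_of_lt hy.2)
          nlinarith [hyE, hEst]
        have hnum : ((n:ℝ)*(1+deriv r y^2)^2 + Kc*(1+deriv r y^2) + (n:ℝ)) * vst
            - (1+deriv r y^2) * ((n:ℝ)*vst^2 + Kc*vst + (n:ℝ)) ≤ 0 := by
          have hp : (0:ℝ) ≤ (vst - (1 + deriv r y^2)) * ((1 + deriv r y^2)*vst - 1) := by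
            apply mul_nonneg (by linarith)
            nlinarith
          rw [hKc]
          nlinarith [hp]
        apply mul_nonpos_of_nonneg_of_nonpos
        · positivity
        · apply div_nonpos_of_nonpos_of_nonneg hnum
          have : (0:ℝ) < vst := by linarith
          positivity
      have hxmem : x ∈ Icc a wst := ⟨hx.1, hxw⟩
      have := hAnti hxmem (right_mem_Icc.2 (le_trans hx.1 hxw)) hxw
      rw [hXiwst] at this
      exact this
    · have hMono : MonotoneOn XI (Icc wst b) := by
        apply monoHelper (hd := fun y hy => hXId y (Icc_subset_Icc_left hwmem.1 hy))
        intro y hy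
        have hyI : y ∈ Icc a b := Icc_subset_Icc_left hwmem.1 (Ioo_subset_Icc_self hy)
        obtain ⟨hyS, hy0, hyE⟩ := hmemf y hyI
        rw [hXIval y hyE.ne']
        have hvy1 : (1:ℝ) < vst := hvst1
        have hvyv : vst ≤ 1 + deriv r y^2 := by
          rw [hvst, hEstdef]
          have := hEmono hwmem hyI (le_of_lt hy.1)
          nlinarith [hEst]
        have hnum : 0 ≤ ((n:ℝ)*(1+deriv r y^2)^2 + Kc*(1+deriv r y^2) + (n:ℝ)) * vst
            - (1+deriv r y^2) * ((n:ℝ)*vst^2 + Kc*vst + (n:ℝ)) := by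
          have hp : (0:ℝ) ≤ ((1 + deriv r y^2) - vst) * ((1 + deriv r y^2)*vst - 1) := by
            apply mul_nonneg (by linarith)
            nlinarith
          rw [hKc]
          nlinarith [hp]
        apply mul_nonneg
        · positivity
        · apply div_nonneg hnum
          have : (0:ℝ) < vst := by linarith
          positivity
      have hxmem : x ∈ Icc wst b := ⟨hxw, hx.2⟩
      have := hMono (left_mem_Icc.2 (le_trans hxw hx.2)) hxmem hxw
      rw [hXiwst] at this
      exact this
  -- Ω monotone
  set OM : ℝ → ℝ := fun x => ((r x / deriv r x)^2 + r x^2) + qstar * (r x / deriv r x - x)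
      - Cc/2 * (r x / deriv r x - x)^2 with hOMdef
  have hOMmono : MonotoneOn OM (Icc a b) := by
    apply monoHelper (φ := fun x => (((n:ℝ)-1) * (1 + deriv r x ^ 2) / deriv r x ^ 2) * XI x)
    · intro x hx
      obtain ⟨hxS, hx0, hE⟩ := hmemf x hx
      have d1 := hasDerivAt_G hn hpos hdiff hode x hxS hE.ne'
      have d2 := hasDerivAt_h hn hpos hdiff hode x hxS hE.ne'
      have := (d1.add (d2.const_mul qstar)).sub ((d2.pow 2).const_mul (Cc/2))
      apply this.congr_deriv
      rw [hXIdef]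
      simp only
      ring
    · intro x hx
      obtain ⟨hxS, hx0, hE⟩ := hmemf x (Ioo_subset_Icc_self hx)
      apply mul_nonneg
      · positivity
      · exact hXinonneg x (Ioo_subset_Icc_self hx)
  have hfin := hOMmono (left_mem_Icc.2 hab.le) (right_mem_Icc.2 hab.le) hab.le
  rw [hOMdef] at hfin
  simp only at hfin
  rw [ha_eq, hb_eq] at hfin
  nlinarith [mul_pos hqstar_pos hcc]

end
end CatAux

/-- With `z₁(c) < 0 < z₂(c)` the two radial-tangency points and
`f_i(c) = z_i(c)² + r(z_i(c) − c)²`, one has `f₁(c) > f₂(c)` for every `c > 0`: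
the key step in the uniqueness of the free boundary `n`-catenoid. -/
theorem squared_radius_strict_comparison (n : ℕ) (hn : 2 ≤ n)
    (T : EReal) (r : ℝ → ℝ) (hr : IsMaxCatenoidProfile n T r)
    (z₁ z₂ : ℝ → ℝ)
    (hdom₁ : ∀ c : ℝ, 0 ≤ c → ((z₁ c - c : ℝ) : EReal) ∈ Set.Ioo (-T) T)
    (hdom₂ : ∀ c : ℝ, 0 ≤ c → ((z₂ c - c : ℝ) : EReal) ∈ Set.Ioo (-T) T)
    (hneg : ∀ c : ℝ, 0 ≤ c → z₁ c < 0)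
    (hpos : ∀ c : ℝ, 0 ≤ c → 0 < z₂ c)
    (heq₁ : ∀ c : ℝ, 0 ≤ c → z₁ c * deriv r (z₁ c - c) = r (z₁ c - c))
    (heq₂ : ∀ c : ℝ, 0 ≤ c → z₂ c * deriv r (z₂ c - c) = r (z₂ c - c))
    (huniq : ∀ c : ℝ, 0 ≤ c → ∀ z : ℝ, ((z - c : ℝ) : EReal) ∈ Set.Ioo (-T) T →
      z * deriv r (z - c) = r (z - c) → z = z₁ c ∨ z = z₂ c)
    (f₁ f₂ : ℝ → ℝ)
    (hf₁ : f₁ = fun c => (z₁ c) ^ 2 + (r (z₁ c - c)) ^ 2)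
    (hf₂ : f₂ = fun c => (z₂ c) ^ 2 + (r (z₂ c - c)) ^ 2) :
    ∀ c : ℝ, 0 < c → f₂ c < f₁ c := by
  obtain ⟨hT, hrpos, hrdiff, h00, h00', hodeZ, -, -⟩ := hr
  have hrpos' : ∀ z ∈ CatAux.S T, 0 < r z := hrpos
  have hrdiff' : ∀ z ∈ CatAux.S T, DifferentiableAt ℝ r z ∧ DifferentiableAt ℝ (deriv r) z :=
    hrdiff
  have hode : ∀ z ∈ CatAux.S T, r z * deriv (deriv r) z = ((n:ℝ)-1) * (1 + deriv r z ^ 2) := by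
    intro z hz
    have := hodeZ z hz
    linarith
  intro c hc
  have hc0 : (0:ℝ) ≤ c := hc.le
  have hw1S : (z₁ c - c) ∈ CatAux.S T := hdom₁ c hc0
  have hw2S : (z₂ c - c) ∈ CatAux.S T := hdom₂ c hc0
  have hz1 := hneg c hc0
  have hz2 := hpos c hc0
  have he1 := heq₁ c hc0
  have he2 := heq₂ c hc0
  have hr1 := hrpos' _ hw1S
  have hr2 := hrpos' _ hw2S
  -- signs of the derivative at the tangency points
  have hE2 : 0 < deriv r (z₂ c - c) := by nlinarith
  have hE1 : deriv r (z₁ c - c) < 0 := by nlinarith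
  -- signs of w₁, w₂
  have hw2pos : 0 < z₂ c - c := by
    by_contra hcon
    push_neg at hcon
    rcases eq_or_lt_of_le hcon with h | h
    · rw [h, h00'] at hE2; linarith
    · have := CatAux.E_neg hn hT hrpos' hrdiff' hode h00' _ hw2S h
      linarith
  have hw1neg : z₁ c - c < 0 := by
    by_contra hcon
    push_neg at hcon
    rcases eq_or_lt_of_le hcon with h | h
    · rw [← h, h00'] at hE1; linarith
    · have := CatAux.E_pos hn hT hrpos' hrdiff' hode h00' _ hw1S h
      linarith
  -- evenness at w₁
  obtain ⟨hev1, hev2⟩ := CatAux.even_r hn hT hrpos' hrdiff' hode h00 h00' _ hw1S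
  have hbS : -(z₁ c - c) ∈ CatAux.S T := CatAux.neg_mem hw1S
  -- h-values
  have hdivA : r (z₂ c - c) / deriv r (z₂ c - c) = z₂ c := by
    rw [eq_comm, eq_div_iff hE2.ne']
    linarith [he2]
  have hdivB : r (z₁ c - c) / deriv r (z₁ c - c) = z₁ c := by
    rw [eq_comm, eq_div_iff hE1.ne]
    linarith [he1]
  have ha_eq : r (z₂ c - c) / deriv r (z₂ c - c) - (z₂ c - c) = c := by
    rw [hdivA]; ring
  have hb_eq : r (-(z₁ c - c)) / deriv r (-(z₁ c - c)) - (-(z₁ c - c)) = -c := by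
    rw [hev1, hev2, div_neg, hdivB]
    ring
  have key := CatAux.key_comparison hn hT hrpos' hrdiff' hode h00 h00'
    (z₂ c - c) (-(z₁ c - c)) c hw2S hbS hw2pos (by linarith) hc ha_eq hb_eq
  rw [hdivA] at key
  rw [hev1, hev2, div_neg, hdivB] at key
  rw [hf₁, hf₂]
  simp only
  nlinarith [key]
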